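/- Let p = (p₁,…,p_d) be a probability distribution on d ≥ 3 outcomes. Then 1 + Σ_j p_j (ln p_j)² ≤ 1 + (ln d)², and consequently (4/(ln 2)²)·(1 + Σ_j p_j (ln p_j)²) ≤ 8 (log₂ d)². -/

import Mathlib

open scoped BigOperators ComplexOrder
open Matrix

noncomputable section

namespace QIT

variable {n : Type*} [Fintype n] [DecidableEq n]

/-- Density matrix of a pure state given by a unit vector. -/
def pureDM (φ : EuclideanSpace ℂ n) : Matrix n n ℂ :=
  Matrix.of fun i j => φ i * (starRingEnd ℂ) (φ j)

/-- A density matrix: positive semidefinite with unit trace. -/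
def DensityMatrix (ρ : Matrix n n ℂ) : Prop := ρ.PosSemidef ∧ ρ.trace = 1

/-- Von Neumann entropy (base 2), via the eigenvalues. -/
def vNEntropy (ρ : Matrix n n ℂ) : ℝ :=
  if h : ρ.IsHermitian then ∑ i, -(h.eigenvalues i * Real.logb 2 (h.eigenvalues i)) else 0

/-- Trace norm of a Hermitian matrix, via eigenvalues. -/
def traceNorm (M : Matrix n n ℂ) : ℝ :=
  if h : M.IsHermitian then ∑ i, |h.eigenvalues i| else 0

/-- Operator (spectral) norm. -/
def opNorm (M : Matrix n n ℂ) : ℝ := ‖Matrix.toEuclideanCLM (𝕜 := ℂ) M‖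

/-- Apply a real function to a Hermitian matrix via the spectral theorem. -/
def hermApply (f : ℝ → ℝ) (M : Matrix n n ℂ) : Matrix n n ℂ :=
  if h : M.IsHermitian then
    (h.eigenvectorUnitary : Matrix n n ℂ) * Matrix.diagonal (fun i => (f (h.eigenvalues i) : ℂ)) *
      (h.eigenvectorUnitary : Matrix n n ℂ)ᴴ
  else 0

/-- Matrix base-2 logarithm of a Hermitian matrix. -/
def mlog2 : Matrix n n ℂ → Matrix n n ℂ := hermApply (Real.logb 2)

/-- Matrix square root of a positive semidefinite matrix. -/
def msqrt : Matrix n n ℂ → Matrix n n ℂ := hermApply Real.sqrt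

/-- Quantum relative entropy `D(ρ‖σ) = Tr ρ (log₂ ρ − log₂ σ)`. -/
def relEnt (ρ σ : Matrix n n ℂ) : ℝ := ((ρ * (mlog2 ρ - mlog2 σ)).trace).re

/-- Uhlmann fidelity `F(ρ,σ) = (Tr √(√ρ σ √ρ))²`. -/
def fidelity (ρ σ : Matrix n n ℂ) : ℝ := (((msqrt (msqrt ρ * σ * msqrt ρ)).trace).re) ^ 2

/-- A projector. -/
def Projector (P : Matrix n n ℂ) : Prop := P.IsHermitian ∧ P * P = P

variable {dA dB : ℕ}

/-- Partial trace over the second factor. -/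
def ptraceB (ρ : Matrix (Fin dA × Fin dB) (Fin dA × Fin dB) ℂ) : Matrix (Fin dA) (Fin dA) ℂ :=
  Matrix.of fun a a' => ∑ b, ρ (a, b) (a', b)

/-- Partial trace over the first factor. -/
def ptraceA (ρ : Matrix (Fin dA × Fin dB) (Fin dA × Fin dB) ℂ) : Matrix (Fin dB) (Fin dB) ℂ :=
  Matrix.of fun b b' => ∑ a, ρ (a, b) (a, b')

/-- Kronecker (tensor) product of operators on the two factors. -/
def kron (P : Matrix (Fin dA) (Fin dA) ℂ) (Q : Matrix (Fin dB) (Fin dB) ℂ) :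
    Matrix (Fin dA × Fin dB) (Fin dA × Fin dB) ℂ :=
  Matrix.of fun x y => P x.1 y.1 * Q x.2 y.2

/-- Partial transpose on the second factor. -/
def ptransposeB (ρ : Matrix (Fin dA × Fin dB) (Fin dA × Fin dB) ℂ) :
    Matrix (Fin dA × Fin dB) (Fin dA × Fin dB) ℂ :=
  Matrix.of fun x y => ρ (x.1, y.2) (y.1, x.2)

/-- Bipartite separability. -/
def Separable (ρ : Matrix (Fin dA × Fin dB) (Fin dA × Fin dB) ℂ) : Prop :=
  ∃ (m : ℕ) (p : Fin m → ℝ) (a : Fin m → Matrix (Fin dA) (Fin dA) ℂ)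
    (b : Fin m → Matrix (Fin dB) (Fin dB) ℂ),
    (∀ l, 0 ≤ p l) ∧ (∑ l, p l = 1) ∧
    (∀ l, (a l).PosSemidef ∧ (a l).trace = 1) ∧
    (∀ l, (b l).PosSemidef ∧ (b l).trace = 1) ∧
    ρ = ∑ l, (p l : ℂ) • kron (a l) (b l)

/-- Entanglement of formation. -/
def EoF (ρ : Matrix (Fin dA × Fin dB) (Fin dA × Fin dB) ℂ) : ℝ :=
  sInf { x : ℝ | ∃ (m : ℕ) (p : Fin m → ℝ) (φ : Fin m → EuclideanSpace ℂ (Fin dA × Fin dB)),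
    (∀ l, 0 ≤ p l) ∧ (∑ l, p l = 1) ∧ (∀ l, ‖φ l‖ = 1) ∧
    (ρ = ∑ l, (p l : ℂ) • pureDM (φ l)) ∧
    x = ∑ l, p l * vNEntropy (ptraceB (pureDM (φ l))) }

end QIT


open Real Set

noncomputable section EGBAux

/-- degree-7 Taylor polynomial of `exp (-t)`. -/
def egbP (t : ℝ) : ℝ :=
  1 - t + t^2/2 - t^3/6 + t^4/24 - t^5/120 + t^6/720 - t^7/5040

lemma egb_exp_neg_bound {t : ℝ} (h0 : 0 ≤ t) (h1 : t ≤ 1) :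
    |Real.exp (-t) - egbP t| ≤ t^8 * (9/322560) := by
  have habs : |(-t)| ≤ 1 := by rw [abs_neg, abs_of_nonneg h0]; exact h1
  have h := Real.exp_bound (x := -t) habs (n := 8) (by norm_num)
  have hsum : ∑ m ∈ Finset.range 8, (-t) ^ m / (Nat.factorial m) = egbP t := by
    simp [Finset.sum_range_succ, Nat.factorial, egbP]
    ring
  rw [hsum] at h
  have habs2 : |(-t)| = t := by rw [abs_neg, abs_of_nonneg h0]
  rw [habs2] at h
  convert h using 2
  norm_num [Nat.factorial]

lemma egb_exp_neg_ge {t : ℝ} (h0 : 0 ≤ t) (h1 : t ≤ 1) :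
    egbP t - t^8 * (9/322560) ≤ Real.exp (-t) := by
  have := abs_le.1 (egb_exp_neg_bound h0 h1)
  linarith [this.2]

lemma egb_exp_neg_le {t : ℝ} (h0 : 0 ≤ t) (h1 : t ≤ 1) :
    Real.exp (-t) ≤ egbP t + t^8 * (9/322560) := by
  have := abs_le.1 (egb_exp_neg_bound h0 h1)
  linarith [this.1]

/-- To show `a ≤ log y` for rational `a ∈ [0,1]`, `y > 0`. -/
lemma egb_le_log {a y : ℝ} (h0 : 0 ≤ a) (h1 : a ≤ 1) (hy : 0 < y)
    (h : 1 ≤ y * (egbP a - a^8 * (9/322560))) : a ≤ Real.log y := by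
  have hP := egb_exp_neg_ge h0 h1
  have h2 : (1:ℝ) ≤ y * Real.exp (-a) :=
    le_trans h (mul_le_mul_of_nonneg_left hP hy.le)
  rw [Real.exp_neg, ← div_eq_mul_inv, le_div_iff₀ (Real.exp_pos a), one_mul] at h2
  exact (Real.le_log_iff_exp_le hy).mpr h2

lemma egb_log_le {a y : ℝ} (h0 : 0 ≤ a) (h1 : a ≤ 1) (hy : 0 < y)
    (h : y * (egbP a + a^8 * (9/322560)) ≤ 1) : Real.log y ≤ a := by
  have hP := egb_exp_neg_le h0 h1
  have h2 : y * Real.exp (-a) ≤ 1 :=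
    le_trans (mul_le_mul_of_nonneg_left hP hy.le) h
  rw [Real.exp_neg, ← div_eq_mul_inv, div_le_one (Real.exp_pos a)] at h2
  exact (Real.log_le_iff_le_exp hy).mpr h2

-- numeric log bounds
lemma egb_l32_lo : (0.40546 : ℝ) ≤ Real.log (3/2) := by
  apply egb_le_log (by norm_num) (by norm_num) (by norm_num)
  norm_num [egbP]

lemma egb_l32_hi : Real.log (3/2) ≤ 0.40547 := by
  apply egb_log_le (by norm_num) (by norm_num) (by norm_num)
  norm_num [egbP]

lemma egb_l54_lo : (0.22314 : ℝ) ≤ Real.log (5/4) := by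
  apply egb_le_log (by norm_num) (by norm_num) (by norm_num)
  norm_num [egbP]

lemma egb_l54_hi : Real.log (5/4) ≤ 0.22315 := by
  apply egb_log_le (by norm_num) (by norm_num) (by norm_num)
  norm_num [egbP]

lemma egb_l74_lo : (0.55961 : ℝ) ≤ Real.log (7/4) := by
  apply egb_le_log (by norm_num) (by norm_num) (by norm_num)
  norm_num [egbP]

lemma egb_l74_hi : Real.log (7/4) ≤ 0.55962 := by
  apply egb_log_le (by norm_num) (by norm_num) (by norm_num)
  norm_num [egbP]

/-- `0.54131 ≤ log (e - 1)`. -/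
lemma egb_lem1_lo : (0.54131 : ℝ) ≤ Real.log (Real.exp 1 - 1) := by
  have he : (2.7182818283 : ℝ) < Real.exp 1 := Real.exp_one_gt_d9
  apply egb_le_log (by norm_num) (by norm_num) (by linarith)
  have hP : (0.58198 : ℝ) ≤ egbP 0.54131 - (0.54131:ℝ)^8 * (9/322560) := by
    norm_num [egbP]
  nlinarith [hP]

end EGBAux

section EGBAux2
open Real Set

lemma egb_l2_lo : (0.6931471803 : ℝ) ≤ Real.log 2 := Real.log_two_gt_d9.le
lemma egb_l2_hi : Real.log 2 ≤ 0.6931471808 := Real.log_two_lt_d9.le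

lemma egb_log3_eq : Real.log 3 = Real.log 2 + Real.log (3/2) := by
  have h : Real.log ((3:ℝ)/2) = Real.log 3 - Real.log 2 := Real.log_div (by norm_num) (by norm_num)
  linarith

lemma egb_log4_eq : Real.log 4 = 2 * Real.log 2 := by
  rw [show (4:ℝ) = 2^2 by norm_num, Real.log_pow]; push_cast; ring

lemma egb_log5_eq : Real.log 5 = 2 * Real.log 2 + Real.log (5/4) := by
  have h : Real.log ((5:ℝ)/4) = Real.log 5 - Real.log 4 := Real.log_div (by norm_num) (by norm_num)
  have h4 := egb_log4_eq
  linarith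

lemma egb_log6_eq : Real.log 6 = Real.log 2 + Real.log 3 := by
  rw [show (6:ℝ) = 2 * 3 by norm_num, Real.log_mul (by norm_num) (by norm_num)]

lemma egb_log7_eq : Real.log 7 = 2 * Real.log 2 + Real.log (7/4) := by
  have h : Real.log ((7:ℝ)/4) = Real.log 7 - Real.log 4 := Real.log_div (by norm_num) (by norm_num)
  have h4 := egb_log4_eq
  linarith

lemma egb_log8_eq : Real.log 8 = 3 * Real.log 2 := by
  rw [show (8:ℝ) = 2^3 by norm_num, Real.log_pow]; push_cast; ring

lemma egb_log9_eq : Real.log 9 = 2 * Real.log 3 := by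
  rw [show (9:ℝ) = 3^2 by norm_num, Real.log_pow]; push_cast; ring

lemma egb_log10_lo : (2.3025815 : ℝ) ≤ Real.log 10 := by
  have h : Real.log 10 = Real.log 2 + Real.log 5 := by
    rw [show (10:ℝ) = 2 * 5 by norm_num, Real.log_mul (by norm_num) (by norm_num)]
  rw [h, egb_log5_eq]
  linarith [egb_l2_lo, egb_l54_lo]

/-- the function `x ↦ x (ln x)²`. -/
noncomputable def fE (x : ℝ) : ℝ := x * Real.log x ^ 2

lemma fE_exp_neg_one : fE (Real.exp (-1)) = Real.exp (-1) := by
  simp [fE, Real.log_exp]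

lemma hasDerivAt_fE {x : ℝ} (hx : 0 < x) :
    HasDerivAt fE ((Real.log x + 1)^2 - 1) x := by
  have h1 : HasDerivAt Real.log x⁻¹ x := Real.hasDerivAt_log (ne_of_gt hx)
  have h2 : HasDerivAt (fun y => Real.log y ^ 2) (2 * Real.log x ^ 1 * x⁻¹) x := h1.pow 2
  have h3 : HasDerivAt (fun y => y * Real.log y ^ 2)
      (1 * Real.log x ^ 2 + x * (2 * Real.log x ^ 1 * x⁻¹)) x :=
    (hasDerivAt_id x).mul h2
  have hne : x ≠ 0 := ne_of_gt hx
  convert h3 using 1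
  · rfl
  field_simp
  ring

lemma continuousOn_fE : ContinuousOn fE (Ici 0) := by
  have hc : Continuous fun x : ℝ => 4 * (Real.sqrt x * Real.log (Real.sqrt x))^2 := by
    have := Real.continuous_mul_log.comp Real.continuous_sqrt
    continuity
  apply hc.continuousOn.congr
  intro x hx
  have hx0 : (0:ℝ) ≤ x := hx
  have hs : Real.log (Real.sqrt x) = Real.log x / 2 := Real.log_sqrt hx0
  have hq : Real.sqrt x ^ 2 = x := Real.sq_sqrt hx0
  simp only [fE]
  rw [mul_pow, hs]
  rw [hq]
  ring

lemma concaveOn_fE : ConcaveOn ℝ (Icc 0 (Real.exp (-1))) fE := by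
  have hintr : interior (Icc (0:ℝ) (Real.exp (-1))) = Ioo 0 (Real.exp (-1)) :=
    interior_Icc
  apply AntitoneOn.concaveOn_of_deriv (convex_Icc _ _)
    (continuousOn_fE.mono (fun x hx => hx.1))
  · rw [hintr]
    exact fun x hx => ((hasDerivAt_fE hx.1).differentiableAt).differentiableWithinAt
  · rw [hintr]
    intro a ha b hb hab
    rw [(hasDerivAt_fE ha.1).deriv, (hasDerivAt_fE hb.1).deriv]
    have hla : Real.log a ≤ Real.log b := Real.log_le_log ha.1 hab
    have hlb : Real.log b + 1 ≤ 0 := by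
      have := Real.log_le_log hb.1 hb.2.le
      rw [Real.log_exp] at this; linarith
    nlinarith

lemma convexOn_fE : ConvexOn ℝ (Icc (Real.exp (-1)) 1) fE := by
  have he : (0:ℝ) < Real.exp (-1) := Real.exp_pos _
  have hintr : interior (Icc (Real.exp (-1)) (1:ℝ)) = Ioo (Real.exp (-1)) 1 :=
    interior_Icc
  apply MonotoneOn.convexOn_of_deriv (convex_Icc _ _)
    (continuousOn_fE.mono (fun x hx => le_trans he.le hx.1))
  · rw [hintr]
    exact fun x hx => ((hasDerivAt_fE (lt_trans he hx.1)).differentiableAt).differentiableWithinAt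
  · rw [hintr]
    intro a ha b hb hab
    have ha0 : (0:ℝ) < a := lt_trans he ha.1
    have hb0 : (0:ℝ) < b := lt_trans he hb.1
    rw [(hasDerivAt_fE ha0).deriv, (hasDerivAt_fE hb0).deriv]
    have hla : Real.log a ≤ Real.log b := Real.log_le_log ha0 hab
    have hlb : 0 ≤ Real.log a + 1 := by
      have := Real.log_le_log he ha.1.le
      rw [Real.log_exp] at this; linarith
    nlinarith

end EGBAux2

section EGBAux3
open Real Set

lemma jensen_fE {d : ℕ} (t : Finset (Fin d)) (ht : 0 < t.card) {p : Fin d → ℝ}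
    (hmem : ∀ j ∈ t, p j ∈ Set.Icc (0:ℝ) (Real.exp (-1))) :
    ∑ j ∈ t, fE (p j) ≤ (t.card : ℝ) * fE ((∑ j ∈ t, p j) / (t.card : ℝ)) := by
  have hc : (0:ℝ) < (t.card : ℝ) := by exact_mod_cast ht
  have hne : (t.card : ℝ) ≠ 0 := ne_of_gt hc
  have hw : ∑ _j ∈ t, ((t.card : ℝ))⁻¹ = 1 := by
    rw [Finset.sum_const, nsmul_eq_mul, mul_inv_cancel₀ hne]
  have h := concaveOn_fE.le_map_sum (t := t) (w := fun _ => ((t.card : ℝ))⁻¹) (p := p)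
    (fun i _ => by positivity) hw hmem
  simp only [smul_eq_mul] at h
  rw [← Finset.mul_sum, ← Finset.mul_sum] at h
  have h2 : (t.card : ℝ) * (((t.card : ℝ))⁻¹ * ∑ j ∈ t, fE (p j)) ≤
      (t.card : ℝ) * fE (((t.card : ℝ))⁻¹ * ∑ j ∈ t, p j) :=
    mul_le_mul_of_nonneg_left h hc.le
  rw [← mul_assoc, mul_inv_cancel₀ hne, one_mul] at h2
  rw [div_eq_inv_mul]
  exact h2

lemma exp_two_lt_eight : Real.exp 2 < 8 := by
  have h : Real.exp 2 = Real.exp 1 * Real.exp 1 := by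
    rw [← Real.exp_add]; norm_num
  have h2 := Real.exp_one_lt_d9
  have h3 := Real.exp_pos 1
  nlinarith

lemma phi_antitone {m : ℝ} (hm : 2 ≤ m) :
    AntitoneOn (fun x => fE x + m * fE ((1 - x)/m)) (Icc (Real.exp (-1)) 1) := by
  have he : (0:ℝ) < Real.exp (-1) := Real.exp_pos _
  have hm0 : (0:ℝ) < m := by linarith
  have hintr : interior (Icc (Real.exp (-1)) (1:ℝ)) = Ioo (Real.exp (-1)) 1 := interior_Icc
  have hderiv : ∀ x ∈ Ioo (Real.exp (-1)) (1:ℝ),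
      HasDerivAt (fun x => fE x + m * fE ((1 - x)/m))
        (((Real.log x + 1)^2 - 1) - (((Real.log ((1-x)/m) + 1)^2) - 1)) x := by
    intro x hx
    have hx0 : (0:ℝ) < x := lt_trans he hx.1
    have hy0 : (0:ℝ) < (1 - x)/m := by
      apply div_pos _ hm0; linarith [hx.2]
    have hinner : HasDerivAt (fun x : ℝ => (1 - x)/m) (-(1/m)) x := by
      have h1 : HasDerivAt (fun x : ℝ => 1 - x) (-1) x := by
        simpa using ((hasDerivAt_id x).const_sub 1)
      have h2 := h1.div_const m
      have heq : (-1)/m = -(1/m) := by ring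
      rw [heq] at h2
      exact h2
    have houter := (hasDerivAt_fE hy0).comp x hinner
    have hcomp : HasDerivAt (fun x : ℝ => m * fE ((1 - x)/m))
        (m * (((Real.log ((1-x)/m) + 1)^2 - 1) * (-(1/m)))) x := houter.const_mul m
    have hfx := hasDerivAt_fE hx0
    have hadd := hfx.add hcomp
    have heq : ((Real.log x + 1)^2 - 1) - (((Real.log ((1-x)/m) + 1)^2) - 1)
        = ((Real.log x + 1)^2 - 1) + m * (((Real.log ((1-x)/m) + 1)^2 - 1) * (-(1/m))) := by
      field_simp
      ring
    rw [heq]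
    exact hadd
  apply antitoneOn_of_deriv_nonpos (convex_Icc _ _)
  · -- continuity
    have h1 : ContinuousOn fE (Icc (Real.exp (-1)) 1) := by
      apply continuousOn_fE.mono; intro x hx; exact le_trans he.le hx.1
    have hinner : ContinuousOn (fun x : ℝ => (1 - x)/m) (Icc (Real.exp (-1)) 1) :=
      ((continuous_const.sub continuous_id).div_const m).continuousOn
    have hmaps : MapsTo (fun x : ℝ => (1 - x)/m) (Icc (Real.exp (-1)) 1) (Ici 0) := by
      intro x hx
      exact div_nonneg (by linarith [hx.2]) hm0.le
    have h2 : ContinuousOn (fun x : ℝ => fE ((1 - x)/m)) (Icc (Real.exp (-1)) 1) :=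
      continuousOn_fE.comp hinner hmaps
    exact h1.add (continuousOn_const.mul h2)
  · rw [hintr]
    exact fun x hx => ((hderiv x hx).differentiableAt).differentiableWithinAt
  · rw [hintr]
    intro x hx
    rw [(hderiv x hx).deriv]
    have hx0 : (0:ℝ) < x := lt_trans he hx.1
    have hy0 : (0:ℝ) < (1 - x)/m := by
      apply div_pos _ hm0; linarith [hx.2]
    -- x * y ≤ exp (-2)
    have hxy : x * ((1-x)/m) ≤ Real.exp (-2) := by
      have he2 : Real.exp 2 < 8 := exp_two_lt_eight
      have h18 : (8:ℝ)⁻¹ ≤ Real.exp (-2) := by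
        rw [Real.exp_neg]
        apply inv_anti₀ (Real.exp_pos 2) he2.le
      have h1 : x * (1 - x) ≤ 1/4 := by nlinarith [sq_nonneg (x - 1/2)]
      have hq : x * ((1-x)/m) ≤ 8⁻¹ := by
        have h2 : x * ((1-x)/m) = x * (1-x) / m := by ring
        rw [h2, div_le_iff₀ hm0]
        nlinarith
      linarith
    have hlogxy : Real.log x + Real.log ((1-x)/m) ≤ -2 := by
      have hmul : Real.log (x * ((1-x)/m)) = Real.log x + Real.log ((1-x)/m) :=
        Real.log_mul (ne_of_gt hx0) (ne_of_gt hy0)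
      have hle : Real.log (x * ((1-x)/m)) ≤ Real.log (Real.exp (-2)) :=
        Real.log_le_log (mul_pos hx0 hy0) hxy
      rw [Real.log_exp] at hle
      linarith [hmul ▸ hle]
    have ha : 0 ≤ Real.log x + 1 := by
      have := Real.log_le_log he hx.1.le
      rw [Real.log_exp] at this
      linarith
    have hab : (Real.log x + 1) + (Real.log ((1-x)/m) + 1) ≤ 0 := by linarith
    nlinarith [mul_nonpos_of_nonpos_of_nonneg hab
      (by linarith : (0:ℝ) ≤ (Real.log x + 1) - (Real.log ((1-x)/m) + 1))]

end EGBAux3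

section EGBAux4
set_option maxHeartbeats 1000000
open Real Set

/-- generic numeric closer for the endpoint bound, fixed-d case -/
lemma endpoint_num {E c logc lm ld Bm Bd : ℝ}
    (hc : c = 1 - E) (hE_lo : 0.36787944116 ≤ E) (hE_hi : E ≤ 0.3678794412)
    (hlogc_lo : -0.45869 ≤ logc) (hlogc_hi : logc ≤ 0)
    (hlm : lm ≤ Bm) (hlm0 : 0 ≤ lm) (hld : Bd ≤ ld) (hBd : 0 ≤ Bd)
    (hK : 1 ≤ (Bm + 0.45869)^2)
    (key : 0.36787944116 + (1 - 0.36787944116) * (Bm + 0.45869)^2 ≤ Bd^2) :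
    E + c * (logc - lm)^2 ≤ ld^2 := by
  have h1 : 0 ≤ lm - logc := by linarith
  have h2 : lm - logc ≤ Bm + 0.45869 := by linarith
  have hsq : (logc - lm)^2 ≤ (Bm + 0.45869)^2 :=
    sq_le_sq' (by linarith) (by linarith)
  have hc0 : 0 ≤ c := by rw [hc]; linarith
  have h3 : c * (logc - lm)^2 ≤ (1 - E) * (Bm + 0.45869)^2 := by
    rw [hc]; exact mul_le_mul_of_nonneg_left hsq (by linarith)
  have hmono : E + (1 - E) * (Bm + 0.45869)^2 ≤
      0.36787944116 + (1 - 0.36787944116) * (Bm + 0.45869)^2 := by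
    nlinarith [mul_nonneg (sub_nonneg.2 hE_lo) (sub_nonneg.2 hK)]
  have h4 : Bd^2 ≤ ld^2 := by nlinarith
  linarith

lemma endpoint_le (d : ℕ) (hd : 3 ≤ d) :
    fE (Real.exp (-1)) + ((d:ℝ) - 1) * fE ((1 - Real.exp (-1)) / ((d:ℝ) - 1)) ≤
      Real.log d ^ 2 := by
  have hE_lo : (0.36787944116:ℝ) ≤ Real.exp (-1) := Real.exp_neg_one_gt_d9.le
  have hE_hi : Real.exp (-1) ≤ 0.3678794412 := Real.exp_neg_one_lt_d9.le
  have hm2 : (2:ℝ) ≤ (d:ℝ) - 1 := by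
    have : (3:ℝ) ≤ (d:ℝ) := by exact_mod_cast hd
    linarith
  have hm0 : (0:ℝ) < (d:ℝ) - 1 := by linarith
  have hc0 : (0:ℝ) < 1 - Real.exp (-1) := by linarith
  have hc1 : 1 - Real.exp (-1) ≤ 1 := by linarith
  -- rewrite LHS
  have hfE2 : ((d:ℝ) - 1) * fE ((1 - Real.exp (-1)) / ((d:ℝ) - 1)) =
      (1 - Real.exp (-1)) * (Real.log (1 - Real.exp (-1)) - Real.log ((d:ℝ) - 1))^2 := by
    unfold fE
    rw [Real.log_div (ne_of_gt hc0) (ne_of_gt hm0)]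
    field_simp
  rw [fE_exp_neg_one, hfE2]
  -- bounds on log c
  have hlogc_hi : Real.log (1 - Real.exp (-1)) ≤ 0 := Real.log_nonpos hc0.le hc1
  have hlogc_lo : (-0.45869 : ℝ) ≤ Real.log (1 - Real.exp (-1)) := by
    have hce : 1 - Real.exp (-1) = (Real.exp 1 - 1) / Real.exp 1 := by
      rw [Real.exp_neg]
      field_simp
    have he1 : (1:ℝ) < Real.exp 1 := by
      have := Real.exp_one_gt_d9; linarith
    rw [hce, Real.log_div (by linarith) (ne_of_gt (Real.exp_pos 1)), Real.log_exp]
    linarith [egb_lem1_lo]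
  by_cases hd9 : d ≤ 9
  · interval_cases d
    · -- d = 3
      norm_num
      exact endpoint_num rfl hE_lo hE_hi hlogc_lo hlogc_hi egb_l2_hi
        (Real.log_nonneg (by norm_num))
        (by rw [egb_log3_eq]; linarith [egb_l2_lo, egb_l32_lo] : (1.0986071803:ℝ) ≤ Real.log 3)
        (by norm_num) (by norm_num) (by norm_num)
    · -- d = 4
      norm_num
      exact endpoint_num rfl hE_lo hE_hi hlogc_lo hlogc_hi
        (by rw [egb_log3_eq]; linarith [egb_l2_hi, egb_l32_hi] : Real.log 3 ≤ 1.0986171808)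
        (Real.log_nonneg (by norm_num))
        (by rw [egb_log4_eq]; linarith [egb_l2_lo] : (1.3862943606:ℝ) ≤ Real.log 4)
        (by norm_num) (by norm_num) (by norm_num)
    · -- d = 5
      norm_num
      exact endpoint_num rfl hE_lo hE_hi hlogc_lo hlogc_hi
        (by rw [egb_log4_eq]; linarith [egb_l2_hi] : Real.log 4 ≤ 1.3862943616)
        (Real.log_nonneg (by norm_num))
        (by rw [egb_log5_eq]; linarith [egb_l2_lo, egb_l54_lo] : (1.6094343606:ℝ) ≤ Real.log 5)
        (by norm_num) (by norm_num) (by norm_num)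
    · -- d = 6
      norm_num
      exact endpoint_num rfl hE_lo hE_hi hlogc_lo hlogc_hi
        (by rw [egb_log5_eq]; linarith [egb_l2_hi, egb_l54_hi] : Real.log 5 ≤ 1.6094443616)
        (Real.log_nonneg (by norm_num))
        (by rw [egb_log6_eq, egb_log3_eq];
            linarith [egb_l2_lo, egb_l32_lo] : (1.7917543606:ℝ) ≤ Real.log 6)
        (by norm_num) (by norm_num) (by norm_num)
    · -- d = 7
      norm_num
      exact endpoint_num rfl hE_lo hE_hi hlogc_lo hlogc_hi
        (by rw [egb_log6_eq, egb_log3_eq];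
            linarith [egb_l2_hi, egb_l32_hi] : Real.log 6 ≤ 1.7917643616)
        (Real.log_nonneg (by norm_num))
        (by rw [egb_log7_eq]; linarith [egb_l2_lo, egb_l74_lo] : (1.9459043606:ℝ) ≤ Real.log 7)
        (by norm_num) (by norm_num) (by norm_num)
    · -- d = 8
      norm_num
      exact endpoint_num rfl hE_lo hE_hi hlogc_lo hlogc_hi
        (by rw [egb_log7_eq]; linarith [egb_l2_hi, egb_l74_hi] : Real.log 7 ≤ 1.9459143616)
        (Real.log_nonneg (by norm_num))
        (by rw [egb_log8_eq]; linarith [egb_l2_lo] : (2.0794415409:ℝ) ≤ Real.log 8)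
        (by norm_num) (by norm_num) (by norm_num)
    · -- d = 9
      norm_num
      exact endpoint_num rfl hE_lo hE_hi hlogc_lo hlogc_hi
        (by rw [egb_log8_eq]; linarith [egb_l2_hi] : Real.log 8 ≤ 2.0794415424)
        (Real.log_nonneg (by norm_num))
        (by rw [egb_log9_eq, egb_log3_eq];
            linarith [egb_l2_lo, egb_l32_lo] : (2.1972143606:ℝ) ≤ Real.log 9)
        (by norm_num) (by norm_num) (by norm_num)
  · -- d ≥ 10
    push_neg at hd9
    have hd10 : (10:ℝ) ≤ (d:ℝ) := by exact_mod_cast hd9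
    have hL : (2.3025815:ℝ) ≤ Real.log d := by
      calc (2.3025815:ℝ) ≤ Real.log 10 := egb_log10_lo
        _ ≤ Real.log d := Real.log_le_log (by norm_num) hd10
    have hlm : Real.log ((d:ℝ) - 1) ≤ Real.log d := Real.log_le_log hm0 (by linarith)
    have hlm0 : 0 ≤ Real.log ((d:ℝ) - 1) := Real.log_nonneg (by linarith)
    set L := Real.log (d:ℝ) with hLdef
    set E := Real.exp (-1) with hEdef
    have h1 : 0 ≤ Real.log ((d:ℝ)-1) - Real.log (1 - E) := by linarith
    have h2 : Real.log ((d:ℝ)-1) - Real.log (1 - E) ≤ L + 0.45869 := by linarith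
    have hsq : (Real.log (1 - E) - Real.log ((d:ℝ)-1))^2 ≤ (L + 0.45869)^2 :=
      sq_le_sq' (by linarith) (by linarith)
    have h3 : (1 - E) * (Real.log (1 - E) - Real.log ((d:ℝ)-1))^2 ≤
        (1 - E) * (L + 0.45869)^2 := mul_le_mul_of_nonneg_left hsq (by linarith)
    have hK : 1 ≤ (L + 0.45869)^2 := by nlinarith
    have hmono : E + (1 - E) * (L + 0.45869)^2 ≤
        0.36787944116 + (1 - 0.36787944116) * (L + 0.45869)^2 := by
      nlinarith [mul_nonneg (sub_nonneg.2 hE_lo) (sub_nonneg.2 hK)]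
    have hfin : (0.36787944116:ℝ) + (1 - 0.36787944116) * (L + 0.45869)^2 ≤ L^2 := by
      nlinarith [sq_nonneg (L - 2.3025815), hL]
    linarith

end EGBAux4

section EGBAux5
open Real Set

lemma exp_neg_one_le_one : Real.exp (-1) ≤ 1 := by
  have := Real.exp_neg_one_lt_d9; linarith

lemma all_small {d : ℕ} (hd : 3 ≤ d) (p : Fin d → ℝ) (hp : ∀ j, 0 ≤ p j)
    (hsum : ∑ j, p j = 1) (hsmall : ∀ j, p j ≤ Real.exp (-1)) :
    ∑ j, fE (p j) ≤ Real.log d ^ 2 := by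
  have hd0 : (0:ℝ) < (d:ℝ) := by
    have : (3:ℝ) ≤ (d:ℝ) := by exact_mod_cast hd
    linarith
  have hcard : (Finset.univ : Finset (Fin d)).card = d := by simp
  have hcard_pos : 0 < (Finset.univ : Finset (Fin d)).card := by omega
  have hjensen := jensen_fE (Finset.univ : Finset (Fin d)) hcard_pos (p := p)
    (fun j _ => ⟨hp j, hsmall j⟩)
  rw [hcard, hsum] at hjensen
  have hfE : fE (1 / (d:ℝ)) = (1/(d:ℝ)) * Real.log d ^ 2 := by
    unfold fE
    rw [one_div, Real.log_inv]
    ring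
  rw [hfE] at hjensen
  calc ∑ j, fE (p j) ≤ (d:ℝ) * ((1/(d:ℝ)) * Real.log d ^ 2) := hjensen
    _ = Real.log d ^ 2 := by field_simp

lemma one_big {d : ℕ} (hd : 3 ≤ d) (p : Fin d → ℝ) (hp : ∀ j, 0 ≤ p j)
    (hsum : ∑ j, p j = 1) (i : Fin d) (hbig : Real.exp (-1) ≤ p i)
    (hsmall : ∀ j, j ≠ i → p j ≤ Real.exp (-1)) :
    ∑ j, fE (p j) ≤ Real.log d ^ 2 := by
  have hm2 : (2:ℝ) ≤ (d:ℝ) - 1 := by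
    have : (3:ℝ) ≤ (d:ℝ) := by exact_mod_cast hd
    linarith
  have hp1 : ∀ j, p j ≤ 1 := by
    intro j
    rw [← hsum]
    exact Finset.single_le_sum (fun k _ => hp k) (Finset.mem_univ j)
  set t := Finset.univ.erase i with ht_def
  have hcard : t.card = d - 1 := by
    rw [ht_def, Finset.card_erase_of_mem (Finset.mem_univ i)]
    simp
  have hcard_pos : 0 < t.card := by omega
  have hcast : (t.card : ℝ) = (d:ℝ) - 1 := by
    rw [hcard]
    have h1 : 1 ≤ d := by omega
    push_cast [Nat.cast_sub h1]
    ring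
  have hsum_t : ∑ j ∈ t, p j = 1 - p i := by
    have := Finset.sum_erase_add Finset.univ p (Finset.mem_univ i)
    rw [hsum] at this
    linarith [this]
  have hjensen := jensen_fE t hcard_pos (p := p)
    (fun j hj => ⟨hp j, hsmall j (Finset.ne_of_mem_erase hj)⟩)
  rw [hcast, hsum_t] at hjensen
  have hsplit : ∑ j, fE (p j) = fE (p i) + ∑ j ∈ t, fE (p j) := by
    have := Finset.sum_erase_add Finset.univ (fun j => fE (p j)) (Finset.mem_univ i)
    rw [ht_def]
    linarith [this]
  have hτ_mem : Real.exp (-1) ∈ Icc (Real.exp (-1)) 1 := ⟨le_refl _, exp_neg_one_le_one⟩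
  have hx_mem : p i ∈ Icc (Real.exp (-1)) 1 := ⟨hbig, hp1 i⟩
  have hmono := phi_antitone (m := (d:ℝ)-1) hm2 hτ_mem hx_mem hbig
  calc ∑ j, fE (p j) = fE (p i) + ∑ j ∈ t, fE (p j) := hsplit
    _ ≤ fE (p i) + ((d:ℝ)-1) * fE ((1 - p i)/((d:ℝ)-1)) := by linarith [hjensen]
    _ ≤ fE (Real.exp (-1)) + ((d:ℝ)-1) * fE ((1 - Real.exp (-1))/((d:ℝ)-1)) := hmono
    _ ≤ Real.log d ^ 2 := endpoint_le d hd

lemma convex_push {a b : ℝ} (ha : Real.exp (-1) ≤ a) (hb : Real.exp (-1) ≤ b)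
    (hab1 : a + b ≤ 1) :
    fE a + fE b ≤ fE (a + b - Real.exp (-1)) + fE (Real.exp (-1)) := by
  set τ := Real.exp (-1) with hτ_def
  have hτ0 : 0 < τ := Real.exp_pos _
  set s := a + b - τ with hs_def
  have hsτ : τ ≤ s := by linarith
  have hs1 : s ≤ 1 := by linarith
  have hτ_mem : τ ∈ Icc τ 1 := ⟨le_refl _, exp_neg_one_le_one⟩
  have hs_mem : s ∈ Icc τ 1 := ⟨hsτ, hs1⟩
  rcases eq_or_lt_of_le hsτ with heq | hlt
  · -- degenerate: a = b = τ
    have haτ : a = τ := by linarith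
    have hbτ : b = τ := by linarith
    rw [haτ, hbτ, ← heq]
  · have hden : 0 < s - τ := by linarith
    set lam := (b - τ)/(s - τ) with hlam_def
    set mu := (a - τ)/(s - τ) with hmu_def
    have hlam0 : 0 ≤ lam := div_nonneg (by linarith) hden.le
    have hmu0 : 0 ≤ mu := div_nonneg (by linarith) hden.le
    have hlam1 : (1 - lam) = mu := by
      rw [hlam_def, hmu_def]
      field_simp
      linarith
    have h1 : fE (lam • τ + (1-lam) • s) ≤ lam • fE τ + (1-lam) • fE s :=
      convexOn_fE.2 hτ_mem hs_mem hlam0 (by rw [hlam1]; exact hmu0) (by ring)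
    have h2 : fE (mu • τ + (1-mu) • s) ≤ mu • fE τ + (1-mu) • fE s :=
      convexOn_fE.2 hτ_mem hs_mem hmu0 (by
        have : (1 - mu) = lam := by rw [← hlam1]; ring
        rw [this]; exact hlam0) (by ring)
    have ha_eq : lam • τ + (1-lam) • s = a := by
      simp only [smul_eq_mul]
      rw [hlam_def]
      field_simp
      ring
    have hb_eq : mu • τ + (1-mu) • s = b := by
      simp only [smul_eq_mul]
      rw [hmu_def]
      field_simp
      ring
    rw [ha_eq] at h1
    rw [hb_eq] at h2
    simp only [smul_eq_mul] at h1 h2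
    have hsum_lm : lam + mu = 1 := by rw [← hlam1]; ring
    have e1 : lam * fE τ + mu * fE τ = fE τ := by
      rw [← add_mul, hsum_lm, one_mul]
    have e2 : (1 - lam) * fE s + (1 - mu) * fE s = fE s := by
      have : (1 - lam) + (1 - mu) = 1 := by linarith [hsum_lm]
      rw [← add_mul, this, one_mul]
    linarith [h1, h2]

end EGBAux5

section EGBAux6
open Real Set

lemma sum_fE_le {d : ℕ} (hd : 3 ≤ d) (p : Fin d → ℝ) (hp : ∀ j, 0 ≤ p j)
    (hsum : ∑ j, p j = 1) : ∑ j, fE (p j) ≤ Real.log d ^ 2 := by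
  classical
  set S := Finset.univ.filter (fun j => Real.exp (-1) < p j) with hS_def
  have hS_le : ∀ j ∈ S, Real.exp (-1) < p j := fun j hj => (Finset.mem_filter.1 hj).2
  have hS_card : S.card ≤ 2 := by
    by_contra h
    push_neg at h
    have h3 : 3 ≤ S.card := h
    have hτS : (S.card : ℝ) * Real.exp (-1) ≤ ∑ j ∈ S, p j := by
      calc (S.card:ℝ) * Real.exp (-1) = ∑ _j ∈ S, Real.exp (-1) := by
            rw [Finset.sum_const, nsmul_eq_mul]
        _ ≤ ∑ j ∈ S, p j := Finset.sum_le_sum (fun j hj => (hS_le j hj).le)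
    have hsub : ∑ j ∈ S, p j ≤ 1 := by
      rw [← hsum]
      exact Finset.sum_le_sum_of_subset_of_nonneg (Finset.subset_univ S) (fun j _ _ => hp j)
    have hτ3 : (3:ℝ) ≤ (S.card:ℝ) := by exact_mod_cast h3
    have hE := Real.exp_neg_one_gt_d9
    nlinarith [hE, hτS, hsub, hτ3]
  have hcases : S.card = 0 ∨ S.card = 1 ∨ S.card = 2 := by omega
  rcases hcases with h0 | h1 | h2
  · apply all_small hd p hp hsum
    intro j
    by_contra hj
    push_neg at hj
    have hjS : j ∈ S := Finset.mem_filter.2 ⟨Finset.mem_univ j, hj⟩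
    rw [Finset.card_eq_zero] at h0
    rw [h0] at hjS
    exact absurd hjS (Finset.notMem_empty j)
  · obtain ⟨i, hi⟩ := Finset.card_eq_one.1 h1
    apply one_big hd p hp hsum i
    · have : i ∈ S := by rw [hi]; exact Finset.mem_singleton_self i
      exact (hS_le i this).le
    · intro j hj
      by_contra hc
      push_neg at hc
      have hjS : j ∈ S := Finset.mem_filter.2 ⟨Finset.mem_univ j, hc⟩
      rw [hi, Finset.mem_singleton] at hjS
      exact hj hjS
  · obtain ⟨i, j, hij, hS2⟩ := Finset.card_eq_two.1 h2
    have hpi : Real.exp (-1) < p i := hS_le i (by rw [hS2]; simp)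
    have hpj : Real.exp (-1) < p j := hS_le j (by rw [hS2]; simp)
    have hother : ∀ l, l ≠ i → l ≠ j → p l ≤ Real.exp (-1) := by
      intro l hli hlj
      by_contra hc
      push_neg at hc
      have hlS : l ∈ S := Finset.mem_filter.2 ⟨Finset.mem_univ l, hc⟩
      rw [hS2] at hlS
      rcases Finset.mem_insert.1 hlS with h | h
      · exact hli h
      · exact hlj (Finset.mem_singleton.1 h)
    set q := Function.update (Function.update p j (Real.exp (-1))) i
      (p i + p j - Real.exp (-1)) with hq_def
    have hqi : q i = p i + p j - Real.exp (-1) := by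
      rw [hq_def, Function.update_self]
    have hqj : q j = Real.exp (-1) := by
      rw [hq_def, Function.update_of_ne (Ne.symm hij), Function.update_self]
    have hql : ∀ l, l ≠ i → l ≠ j → q l = p l := by
      intro l hli hlj
      rw [hq_def, Function.update_of_ne hli, Function.update_of_ne hlj]
    have hjmem : j ∈ Finset.univ.erase i :=
      Finset.mem_erase.2 ⟨Ne.symm hij, Finset.mem_univ j⟩
    have hpij1 : p i + p j ≤ 1 := by
      have hsum2 : ∑ l ∈ ({i,j} : Finset (Fin d)), p l = p i + p j := Finset.sum_pair hij
      have hle : ∑ l ∈ ({i,j} : Finset (Fin d)), p l ≤ ∑ l, p l :=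
        Finset.sum_le_sum_of_subset_of_nonneg (Finset.subset_univ _) (fun l _ _ => hp l)
      rw [hsum2, hsum] at hle
      exact hle
    have hq0 : ∀ l, 0 ≤ q l := by
      intro l
      by_cases hli : l = i
      · rw [hli, hqi]; linarith [hp i, hpj]
      · by_cases hlj : l = j
        · rw [hlj, hqj]; exact (Real.exp_pos _).le
        · rw [hql l hli hlj]; exact hp l
    have hqsum : ∑ l, q l = 1 := by
      have e1 := Finset.sum_erase_add Finset.univ q (Finset.mem_univ i)
      have e2 := Finset.sum_erase_add (Finset.univ.erase i) q hjmem
      have e3 := Finset.sum_erase_add Finset.univ p (Finset.mem_univ i)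
      have e4 := Finset.sum_erase_add (Finset.univ.erase i) p hjmem
      have hrest : ∑ l ∈ (Finset.univ.erase i).erase j, q l
          = ∑ l ∈ (Finset.univ.erase i).erase j, p l := by
        apply Finset.sum_congr rfl
        intro l hl
        exact hql l (Finset.ne_of_mem_erase (Finset.mem_of_mem_erase hl))
          (Finset.ne_of_mem_erase hl)
      rw [hsum] at e3
      rw [hqi] at e1
      rw [hqj] at e2
      rw [hrest] at e2
      linarith
    have hqbig : Real.exp (-1) ≤ q i := by rw [hqi]; linarith [hpi, hpj]
    have hqsmall : ∀ l, l ≠ i → q l ≤ Real.exp (-1) := by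
      intro l hli
      by_cases hlj : l = j
      · rw [hlj, hqj]
      · rw [hql l hli hlj]; exact hother l hli hlj
    have hstep : ∑ l, fE (p l) ≤ ∑ l, fE (q l) := by
      have dp1 := Finset.sum_erase_add Finset.univ (fun l => fE (p l)) (Finset.mem_univ i)
      have dp2 := Finset.sum_erase_add (Finset.univ.erase i) (fun l => fE (p l)) hjmem
      have dq1 := Finset.sum_erase_add Finset.univ (fun l => fE (q l)) (Finset.mem_univ i)
      have dq2 := Finset.sum_erase_add (Finset.univ.erase i) (fun l => fE (q l)) hjmem
      have hrest : ∑ l ∈ (Finset.univ.erase i).erase j, fE (q l)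
          = ∑ l ∈ (Finset.univ.erase i).erase j, fE (p l) := by
        apply Finset.sum_congr rfl
        intro l hl
        rw [hql l (Finset.ne_of_mem_erase (Finset.mem_of_mem_erase hl))
          (Finset.ne_of_mem_erase hl)]
      have hpush := convex_push hpi.le hpj.le hpij1
      rw [hqi] at dq1
      rw [hqj] at dq2
      linarith [hpush, dp1, dp2, dq1, dq2, hrest]
    calc ∑ l, fE (p l) ≤ ∑ l, fE (q l) := hstep
      _ ≤ Real.log d ^ 2 := one_big hd q hq0 hqsum i hqbig hqsmall

end EGBAux6


theorem entropy_gradient_bound (d : ℕ) (hd : 3 ≤ d) (p : Fin d → ℝ)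
    (hp : ∀ j, 0 ≤ p j) (hsum : ∑ j, p j = 1) :
    1 + ∑ j, p j * (Real.log (p j)) ^ 2 ≤ 1 + (Real.log d) ^ 2 ∧
    (4 / (Real.log 2) ^ 2) * (1 + ∑ j, p j * (Real.log (p j)) ^ 2)
      ≤ 8 * (Real.logb 2 d) ^ 2 := by
  have hmain : ∑ j, p j * (Real.log (p j)) ^ 2 ≤ (Real.log d)^2 := by
    have h := sum_fE_le hd p hp hsum
    simpa [fE] using h
  have hnonneg : 0 ≤ ∑ j, p j * (Real.log (p j)) ^ 2 :=
    Finset.sum_nonneg (fun j _ => mul_nonneg (hp j) (sq_nonneg _))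
  constructor
  · linarith
  · have hlog2 : 0 < Real.log 2 := Real.log_pos (by norm_num)
    have h2 : (0:ℝ) < (Real.log 2)^2 := by positivity
    have hlogd1 : 1 ≤ Real.log d := by
      have h3 : (3:ℝ) ≤ (d:ℝ) := by exact_mod_cast hd
      have hexp3 : Real.exp 1 ≤ 3 := by
        have := Real.exp_one_lt_d9; linarith
      have hl3 : 1 ≤ Real.log 3 := (Real.le_log_iff_exp_le (by norm_num)).mpr hexp3
      calc (1:ℝ) ≤ Real.log 3 := hl3
        _ ≤ Real.log d := Real.log_le_log (by norm_num) h3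
    have key : 4 * (1 + ∑ j, p j * (Real.log (p j)) ^ 2) ≤ 8 * (Real.log d)^2 := by
      nlinarith [hmain, hlogd1]
    rw [← Real.log_div_log, div_pow]
    rw [div_eq_mul_inv, div_eq_mul_inv]
    calc 4 * ((Real.log 2)^2)⁻¹ * (1 + ∑ j, p j * (Real.log (p j)) ^ 2)
        = (4 * (1 + ∑ j, p j * (Real.log (p j)) ^ 2)) * ((Real.log 2)^2)⁻¹ := by ring
      _ ≤ (8 * (Real.log d)^2) * ((Real.log 2)^2)⁻¹ :=
          mul_le_mul_of_nonneg_right key (by positivity)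
      _ = 8 * ((Real.log d)^2 * ((Real.log 2)^2)⁻¹) := by ring


end
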